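/- Let n ≥ 1 and p ≥ 1 be natural numbers, and let μ be the uniform (rotation-invariant) probability measure on the unit sphere in EuclideanSpace ℝ (Fin (2n)). Then the p-th moment of the first edgelength of a random planar arm of length 2 satisfies ∫ (2·(x₀² + x₁²))^p dμ(x) = 2^p · B(p, n) / B(p, 1), where x₀, x₁ are the first two coordinates of x and B is the Euler Beta function B(a,b) = Γ(a)Γ(b)/Γ(a+b). -/

import Mathlib

open MeasureTheory Real

/-- The Euler Beta function `B(a,b) = Γ(a)Γ(b)/Γ(a+b)`. -/
noncomputable def eulerBeta (a b : ℝ) : ℝ := Real.Gamma a * Real.Gamma b / Real.Gamma (a + b)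

noncomputable section EdgeAux

def eidx (n : ℕ) (j : Fin n) (k : Fin 2) : Fin (2*n) := ⟨2*j.val+k.val, by omega⟩

lemma esum_pairs (n : ℕ) (f : Fin (2*n) → ℝ) :
    ∑ i, f i = ∑ j : Fin n, (f (eidx n j 0) + f (eidx n j 1)) := by
  have hbij : Function.Bijective (fun jk : Fin n × Fin 2 => eidx n jk.1 jk.2) := by
    rw [Fintype.bijective_iff_injective_and_card]
    constructor
    · rintro ⟨j, k⟩ ⟨j', k'⟩ h
      simp only [eidx, Fin.mk.injEq] at h
      have hk := k.isLt; have hk' := k'.isLt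
      have hjj : j.val = j'.val ∧ k.val = k'.val := by omega
      simp [Prod.ext_iff, Fin.ext_iff, hjj.1, hjj.2]
    · simp [Fintype.card_prod, mul_comm]
  rw [← Fintype.sum_bijective _ hbij _ f (fun _ => rfl), Fintype.sum_prod_type]
  simp [Fin.sum_univ_two]

def phiL (n : ℕ) : EuclideanSpace ℝ (Fin (2*n)) ≃ₗ[ℝ] EuclideanSpace ℂ (Fin n) where
  toFun x := WithLp.toLp 2 (fun j => ⟨x (eidx n j 0), x (eidx n j 1)⟩)
  invFun z := WithLp.toLp 2 (fun i => if (i : ℕ) % 2 = 0 then (z ⟨(i:ℕ)/2, by omega⟩).re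
      else (z ⟨(i:ℕ)/2, by omega⟩).im)
  map_add' x y := by
    ext j
    apply Complex.ext <;> simp [PiLp.add_apply]
  map_smul' c x := by
    ext j
    apply Complex.ext <;> simp [PiLp.smul_apply, Complex.smul_re, Complex.smul_im]
  left_inv x := by
    ext i
    dsimp only
    by_cases h : (i : ℕ) % 2 = 0
    · rw [if_pos h]
      show x (eidx n ⟨(i:ℕ)/2, _⟩ 0) = x i
      refine congrArg x.ofLp (Fin.ext ?_)
      simp only [eidx]
      omega
    · rw [if_neg h]
      show x (eidx n ⟨(i:ℕ)/2, _⟩ 1) = x i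
      refine congrArg x.ofLp (Fin.ext ?_)
      simp only [eidx]
      omega
  right_inv z := by
    ext j
    dsimp only
    apply Complex.ext
    · have h0 : ((eidx n j 0 : Fin (2*n)) : ℕ) % 2 = 0 := by simp only [eidx]; omega
      show (if _ then _ else _) = _
      rw [if_pos h0]
      refine congrArg (fun k => (z k).re) (Fin.ext ?_)
      simp only [eidx]
      omega
    · have h1 : ¬ ((eidx n j 1 : Fin (2*n)) : ℕ) % 2 = 0 := by simp only [eidx]; omega
      show (if _ then _ else _) = _
      rw [if_neg h1]
      refine congrArg (fun k => (z k).im) (Fin.ext ?_)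
      simp only [eidx]
      omega

def ephi (n : ℕ) : EuclideanSpace ℝ (Fin (2*n)) ≃ₗᵢ[ℝ] EuclideanSpace ℂ (Fin n) :=
  { phiL n with
    norm_map' := by
      intro x
      rw [EuclideanSpace.norm_eq, EuclideanSpace.norm_eq, esum_pairs n (fun i => ‖x i‖^2)]
      congr 1
      refine Finset.sum_congr rfl fun j _ => ?_
      show ‖(⟨x (eidx n j 0), x (eidx n j 1)⟩ : ℂ)‖^2 = _
      rw [Complex.sq_norm, Complex.normSq_mk]
      simp [Real.norm_eq_abs, sq_abs, sq] }

lemma ephi_apply (n : ℕ) (x : EuclideanSpace ℝ (Fin (2*n))) (j : Fin n) :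
    ephi n x j = ⟨x (eidx n j 0), x (eidx n j 1)⟩ := rfl



variable (n : ℕ)

def eq2 (x y : EuclideanSpace ℝ (Fin (2*n))) : ℝ :=
  ‖(inner ℂ (ephi n x) (ephi n y) : ℂ)‖^2

lemma eq2_symm (x y : EuclideanSpace ℝ (Fin (2*n))) : eq2 n x y = eq2 n y x := by
  unfold eq2
  rw [← inner_conj_symm, RCLike.norm_conj]

lemma eq2_le (x y : EuclideanSpace ℝ (Fin (2*n))) : eq2 n x y ≤ ‖x‖^2 * ‖y‖^2 := by
  unfold eq2
  rw [← mul_pow]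
  have := norm_inner_le_norm (𝕜 := ℂ) (ephi n x) (ephi n y)
  rw [(ephi n).norm_map, (ephi n).norm_map] at this
  have h0 : (0:ℝ) ≤ ‖(inner ℂ (ephi n x) (ephi n y) : ℂ)‖ := norm_nonneg _
  nlinarith

lemma eq2_smul_right (c : ℝ) (x y : EuclideanSpace ℝ (Fin (2*n))) :
    eq2 n x (c • y) = c^2 * eq2 n x y := by
  unfold eq2
  rw [(ephi n).map_smul, RCLike.real_smul_eq_coe_smul (K := ℂ), inner_smul_right, norm_mul]
  simp [mul_pow, sq_abs]

lemma eq2_cont : Continuous (fun xy : EuclideanSpace ℝ (Fin (2*n)) × EuclideanSpace ℝ (Fin (2*n)) => eq2 n xy.1 xy.2) := by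
  unfold eq2
  have hc : Continuous fun xy : EuclideanSpace ℝ (Fin (2*n)) × EuclideanSpace ℝ (Fin (2*n)) =>
      (inner ℂ (ephi n xy.1) (ephi n xy.2) : ℂ) :=
    Continuous.inner ((ephi n).continuous.comp continuous_fst)
      ((ephi n).continuous.comp continuous_snd)
  exact hc.norm.pow 2

lemma exists_O (hn : 0 < n) {y : EuclideanSpace ℝ (Fin (2*n))} (hy : ‖y‖ = 1) :
    ∃ O : EuclideanSpace ℝ (Fin (2*n)) ≃ₗᵢ[ℝ] EuclideanSpace ℝ (Fin (2*n)),
      O ((ephi n).symm (EuclideanSpace.single ⟨0,hn⟩ 1)) = y ∧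
      ∀ x x', eq2 n (O x) (O x') = eq2 n x x' := by
  set i0 : Fin n := ⟨0, hn⟩
  set w := ephi n y with hw
  have hwn : ‖w‖ = 1 := by rw [hw, (ephi n).norm_map]; exact hy
  have hcard : Module.finrank ℂ (EuclideanSpace ℂ (Fin n)) = Fintype.card (Fin n) :=
    finrank_euclideanSpace
  have horth : Orthonormal ℂ (Set.restrict {i0} (fun _ : Fin n => w)) := by
    constructor
    · intro i; exact hwn
    · intro i j hij
      exact absurd (Subtype.ext (by rw [i.2, j.2])) hij
  obtain ⟨b, hb⟩ := horth.exists_orthonormalBasis_extension_of_card_eq hcard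
  have hb0 : b i0 = w := hb i0 rfl
  set U : EuclideanSpace ℂ (Fin n) ≃ₗᵢ[ℂ] EuclideanSpace ℂ (Fin n) := b.repr.symm with hU
  have hUs : U (EuclideanSpace.single i0 1) = w := by
    rw [hU]; rw [b.repr_symm_single]; exact hb0
  set Ur : EuclideanSpace ℂ (Fin n) ≃ₗᵢ[ℝ] EuclideanSpace ℂ (Fin n) :=
    { toLinearEquiv := U.toLinearEquiv.restrictScalars ℝ, norm_map' := U.norm_map } with hUr
  have hUrU : ∀ v, Ur v = U v := fun _ => rfl
  refine ⟨(ephi n).trans (Ur.trans (ephi n).symm), ?_, ?_⟩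
  · show (ephi n).symm (Ur (ephi n ((ephi n).symm _))) = y
    rw [(ephi n).apply_symm_apply, hUrU, hUs, hw, (ephi n).symm_apply_apply]
  · intro x x'
    show eq2 n ((ephi n).symm (Ur (ephi n x))) ((ephi n).symm (Ur (ephi n x'))) = _
    unfold eq2
    rw [(ephi n).apply_symm_apply, (ephi n).apply_symm_apply, hUrU, hUrU,
      U.inner_map_map]

lemma eJval (m : ℕ) :
    ∫ x in Set.Ioi (0:ℝ), x ^ m * rexp (-π * x^2)
      = π ^ (-((m:ℝ)+1)/2) * (1/2) * Real.Gamma (((m:ℝ)+1)/2) := by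
  rw [← integral_rpow_mul_exp_neg_mul_rpow (p := 2) (q := (m:ℝ)) two_pos
    (lt_of_lt_of_le neg_one_lt_zero (Nat.cast_nonneg m)) pi_pos]
  refine setIntegral_congr_fun measurableSet_Ioi fun x hx => ?_
  rw [Real.rpow_natCast]
  norm_num [Real.rpow_two]

lemma eJval_pos (m : ℕ) : 0 < ∫ x in Set.Ioi (0:ℝ), x ^ m * rexp (-π * x^2) := by
  rw [eJval]
  have h1 : 0 < ((m:ℝ)+1)/2 := by positivity
  have := Real.Gamma_pos_of_pos h1
  positivity

lemma egauss_total (ι : Type*) [Fintype ι] :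
    ∫ w : EuclideanSpace ℝ ι, rexp (-π * ‖w‖^2) = 1 := by
  have h := (EuclideanSpace.volume_preserving_symm_measurableEquiv_toLp ι).integral_comp
    (MeasurableEquiv.toLp 2 (ι → ℝ)).symm.measurableEmbedding
    (fun a : ι → ℝ => rexp (-π * ∑ i, (a i)^2))
  have h2 : ∀ w : EuclideanSpace ℝ ι, ‖w‖^2 = ∑ i, (w i)^2 := by
    intro w
    rw [EuclideanSpace.norm_eq, Real.sq_sqrt (by positivity)]
    simp [sq_abs]
  calc ∫ w : EuclideanSpace ℝ ι, rexp (-π * ‖w‖^2)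
      = ∫ a : ι → ℝ, rexp (-π * ∑ i, (a i)^2) := by
        rw [← h]; congr 1; funext w; rw [h2]; rfl
    _ = ∫ a : ι → ℝ, ∏ i, rexp (-π * (a i)^2) := by
        congr 1; funext a
        rw [← Real.exp_sum]
        congr 1
        rw [Finset.mul_sum]
    _ = (∫ x : ℝ, rexp (-π * x^2)) ^ Fintype.card ι := by
        exact MeasureTheory.integral_fintype_prod_eq_pow (ι := ι) (fun x : ℝ => rexp (-π * x^2))
    _ = 1 := by
        rw [integral_gaussian, div_self pi_ne_zero, Real.sqrt_one, one_pow]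

lemma egauss_moment (ι : Type*) [Fintype ι] (hne : Nonempty ι) (k : ℕ) :
    ∫ w : EuclideanSpace ℝ ι, ‖w‖^(2*k) * rexp (-π * ‖w‖^2)
      = Real.Gamma ((Fintype.card ι : ℝ)/2 + k) / (π ^ k * Real.Gamma ((Fintype.card ι : ℝ)/2)) := by
  haveI := hne
  haveI := Classical.decEq ι
  haveI : Nontrivial (EuclideanSpace ℝ ι) := by
    obtain ⟨i⟩ := hne
    have h1 : ‖EuclideanSpace.single i (1:ℝ)‖ = 1 := by
      rw [EuclideanSpace.norm_single]; norm_num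
    refine nontrivial_of_ne (EuclideanSpace.single i 1) 0 fun h => ?_
    rw [h] at h1; simp at h1
  set d := Fintype.card ι with hd
  have hd1 : 1 ≤ d := Fintype.card_pos
  have hrad : ∀ f : ℝ → ℝ, ∫ w : EuclideanSpace ℝ ι, f ‖w‖
      = d • (volume (Metric.ball (0:EuclideanSpace ℝ ι) 1)).toReal •
        ∫ y in Set.Ioi (0:ℝ), y ^ (d-1) • f y := by
    intro f
    rw [MeasureTheory.integral_fun_norm_addHaar volume f, finrank_euclideanSpace]
    rfl
  set v := (volume (Metric.ball (0:EuclideanSpace ℝ ι) 1)).toReal with hv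
  have hmom : ∫ w : EuclideanSpace ℝ ι, ‖w‖^(2*k) * rexp (-π * ‖w‖^2)
      = (d * v) * ∫ y in Set.Ioi (0:ℝ), y ^ (d-1+2*k) * rexp (-π * y^2) := by
    rw [hrad (fun t => t^(2*k) * rexp (-π * t^2))]
    rw [nsmul_eq_mul, smul_eq_mul, mul_assoc]
    congr 1
    apply congrArg
    apply integral_congr_ae
    filter_upwards with y
    rw [smul_eq_mul, pow_add]
    ring
  have htot : (d * v) * ∫ y in Set.Ioi (0:ℝ), y ^ (d-1) * rexp (-π * y^2) = 1 := by
    have := egauss_total ι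
    rw [hrad (fun t => rexp (-π * t^2))] at this
    rw [← this, nsmul_eq_mul, smul_eq_mul, mul_assoc]
    simp only [smul_eq_mul]
  have hJpos := eJval_pos (d-1)
  have hdv : (d:ℝ) * v = (∫ y in Set.Ioi (0:ℝ), y ^ (d-1) * rexp (-π * y^2))⁻¹ := by
    rw [← one_mul (∫ y in Set.Ioi (0:ℝ), y ^ (d-1) * rexp (-π * y^2))⁻¹, ← htot,
      mul_assoc, mul_inv_cancel₀ hJpos.ne', mul_one]
  rw [hmom, hdv, eJval, eJval]
  have hc1 : ((d-1+2*k:ℕ):ℝ) + 1 = (d:ℝ) + 2*k := by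
    push_cast [Nat.cast_sub hd1]
    ring
  have hc2 : ((d-1:ℕ):ℝ) + 1 = (d:ℝ) := by
    push_cast [Nat.cast_sub hd1]
    ring
  rw [hc1, hc2]
  have hA : ((d:ℝ)+2*k)/2 = (d:ℝ)/2 + k := by ring
  have hE : (-((d:ℝ)+2*k)/2) = -((d:ℝ))/2 + (-(k:ℝ)) := by ring
  rw [hA, hE, Real.rpow_add pi_pos, Real.rpow_neg pi_pos.le, Real.rpow_natCast]
  have hg1 : 0 < Real.Gamma ((d:ℝ)/2) := Real.Gamma_pos_of_pos (by positivity)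
  have hg2 : 0 < Real.Gamma ((d:ℝ)/2 + k) := Real.Gamma_pos_of_pos (by positivity)
  have hp1 : (0:ℝ) < π ^ (-((d:ℝ))/2) := Real.rpow_pos_of_pos pi_pos _
  have hp2 : (0:ℝ) < (π:ℝ) ^ k := by positivity
  field_simp

lemma enorm_sq {ι : Type*} [Fintype ι] (w : EuclideanSpace ℝ ι) :
    ‖w‖^2 = ∑ i, (w i)^2 := by
  rw [EuclideanSpace.norm_eq, Real.sq_sqrt (by positivity)]
  simp [sq_abs]

lemma epi_gauss_total (ι : Type*) [Fintype ι] :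
    ∫ a : ι → ℝ, rexp (-π * ∑ i, (a i)^2) = 1 := by
  calc ∫ a : ι → ℝ, rexp (-π * ∑ i, (a i)^2)
      = ∫ a : ι → ℝ, ∏ i, rexp (-π * (a i)^2) := by
        congr 1; funext a
        rw [← Real.exp_sum]
        congr 1
        rw [Finset.mul_sum]
    _ = (∫ x : ℝ, rexp (-π * x^2)) ^ Fintype.card ι := by
        exact MeasureTheory.integral_fintype_prod_eq_pow (ι := ι) (fun x : ℝ => rexp (-π * x^2))
    _ = 1 := by
        rw [integral_gaussian, div_self pi_ne_zero, Real.sqrt_one, one_pow]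

lemma eC (n p : ℕ) (hn : 0 < n) :
    ∫ y : EuclideanSpace ℝ (Fin (2*n)),
        ((y ⟨0, by omega⟩)^2 + (y ⟨1, by omega⟩)^2)^p * rexp (-π * ‖y‖^2)
      = Real.Gamma (1 + p) / π ^ p := by
  set i0 : Fin (2*n) := ⟨0, by omega⟩ with hi0
  set i1 : Fin (2*n) := ⟨1, by omega⟩ with hi1
  have hi01 : i0 ≠ i1 := by simp [hi0, hi1, Fin.ext_iff]
  set pr : Fin (2*n) → Prop := fun i => i = i0 ∨ i = i1 with hpr
  haveI : DecidablePred pr := fun i => inferInstanceAs (Decidable (_ ∨ _))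
  set s0 : {i // pr i} := ⟨i0, Or.inl rfl⟩ with hs0
  set s1 : {i // pr i} := ⟨i1, Or.inr rfl⟩ with hs1
  have hs01 : s0 ≠ s1 := fun h => hi01 (congrArg Subtype.val h)
  have huniv : (Finset.univ : Finset {i // pr i}) = {s0, s1} := by
    ext s
    simp only [Finset.mem_univ, true_iff, Finset.mem_insert, Finset.mem_singleton]
    rcases s.2 with h | h
    · exact Or.inl (Subtype.ext h)
    · exact Or.inr (Subtype.ext h)
  have hcard2 : Fintype.card {i // pr i} = 2 := by
    rw [← Finset.card_univ, huniv, Finset.card_pair hs01]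
  -- step 1 : to pi
  have h1 : ∫ y : EuclideanSpace ℝ (Fin (2*n)),
        ((y i0)^2 + (y i1)^2)^p * rexp (-π * ‖y‖^2)
      = ∫ a : Fin (2*n) → ℝ, ((a i0)^2 + (a i1)^2)^p * rexp (-π * ∑ i, (a i)^2) := by
    rw [← (EuclideanSpace.volume_preserving_symm_measurableEquiv_toLp (Fin (2*n))).integral_comp
      (MeasurableEquiv.toLp 2 (Fin (2*n) → ℝ)).symm.measurableEmbedding
      (fun a : Fin (2*n) → ℝ => ((a i0)^2 + (a i1)^2)^p * rexp (-π * ∑ i, (a i)^2))]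
    congr 1
    funext y
    rw [enorm_sq]
    rfl
  -- step 2 : split coordinates
  set eqv := MeasurableEquiv.piEquivPiSubtypeProd (fun _ : Fin (2*n) => ℝ) pr with heqv
  set F : (Fin (2*n) → ℝ) → ℝ :=
    fun a => ((a i0)^2 + (a i1)^2)^p * rexp (-π * ∑ i, (a i)^2) with hF
  have h2 : ∫ a : Fin (2*n) → ℝ, F a
      = ∫ z : ({i // pr i} → ℝ) × ({i // ¬ pr i} → ℝ), F (eqv.symm z) := by
    rw [← ((MeasureTheory.volume_preserving_piEquivPiSubtypeProd
        (fun _ : Fin (2*n) => ℝ) pr).symm eqv).integral_comp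
      eqv.symm.measurableEmbedding F]
  have key : ∀ z : ({i // pr i} → ℝ) × ({i // ¬ pr i} → ℝ),
      F (eqv.symm z)
        = (((z.1 s0)^2 + (z.1 s1)^2)^p * rexp (-π * ∑ s, (z.1 s)^2))
          * rexp (-π * ∑ t, (z.2 t)^2) := by
    rintro ⟨u, v⟩
    have ha : ∀ i, eqv.symm (u, v) i = if h : pr i then u ⟨i, h⟩ else v ⟨i, h⟩ := by
      intro i
      rw [heqv]
      rfl
    have hai0 : eqv.symm (u, v) i0 = u s0 := by rw [ha, dif_pos (Or.inl rfl)]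
    have hai1 : eqv.symm (u, v) i1 = u s1 := by rw [ha, dif_pos (Or.inr rfl)]
    have hsum : ∑ i, (eqv.symm (u, v) i)^2 = (∑ s, (u s)^2) + ∑ t, (v t)^2 := by
      rw [← Fintype.sum_subtype_add_sum_subtype pr (fun i => (eqv.symm (u, v) i)^2)]
      congr 1
      · refine Finset.sum_congr rfl fun s _ => ?_
        rw [ha, dif_pos s.2]
      · refine Finset.sum_congr rfl fun t _ => ?_
        rw [ha, dif_neg t.2]
    rw [hF]
    simp only
    rw [hai0, hai1, hsum, mul_add, Real.exp_add, ← mul_assoc]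
  have h3 : ∫ z : ({i // pr i} → ℝ) × ({i // ¬ pr i} → ℝ), F (eqv.symm z)
      = (∫ u : {i // pr i} → ℝ, ((u s0)^2 + (u s1)^2)^p * rexp (-π * ∑ s, (u s)^2))
        * ∫ v : {i // ¬ pr i} → ℝ, rexp (-π * ∑ t, (v t)^2) := by
    simp_rw [key]
    rw [MeasureTheory.Measure.volume_eq_prod, MeasureTheory.integral_prod_mul
      (f := fun u : {i // pr i} → ℝ => ((u s0)^2 + (u s1)^2)^p * rexp (-π * ∑ s, (u s)^2))
      (g := fun v : {i // ¬ pr i} → ℝ => rexp (-π * ∑ t, (v t)^2))]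
  -- step 6 : the two-dim factor
  have h6 : ∫ u : {i // pr i} → ℝ, ((u s0)^2 + (u s1)^2)^p * rexp (-π * ∑ s, (u s)^2)
      = Real.Gamma (1 + p) / π ^ p := by
    rw [← (EuclideanSpace.volume_preserving_symm_measurableEquiv_toLp {i // pr i}).integral_comp
      (MeasurableEquiv.toLp 2 ({i // pr i} → ℝ)).symm.measurableEmbedding
      (fun u : {i // pr i} → ℝ => ((u s0)^2 + (u s1)^2)^p * rexp (-π * ∑ s, (u s)^2))]
    have hw : ∀ w : EuclideanSpace ℝ {i // pr i}, (w s0)^2 + (w s1)^2 = ‖w‖^2 := by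
      intro w
      rw [enorm_sq, huniv, Finset.sum_pair hs01]
    have := egauss_moment {i // pr i} ⟨s0⟩ p
    rw [hcard2] at this
    norm_num at this
    rw [← this]
    congr 1
    funext w
    show ((w s0)^2 + (w s1)^2)^p * rexp (-π * ∑ s, (w s)^2) = _
    rw [hw w, ← enorm_sq, pow_mul, neg_mul]
  rw [h1, h2, h3, h6, epi_gauss_total, mul_one]

end EdgeAux

open MeasureTheory Real


/-- The `p`-th moment of the first edgelength of a random planar arm of total length 2:
`E(|e₁|^p, Arm₂(n)) = 2^p · B(p,n)/B(p,1)`.  Here `μ` is the uniform (rotation-invariant)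
probability measure on the unit sphere in `ℝ^{2n}`, and the first edgelength of the arm
determined by `√2·x` is `2(x₀² + x₁²)`. -/
theorem edgelength_moment_planar_arm (n p : ℕ) (hn : 1 ≤ n) (hp : 1 ≤ p)
    (μ : Measure (EuclideanSpace ℝ (Fin (2 * n)))) [IsProbabilityMeasure μ]
    (hsphere : μ (Metric.sphere (0 : EuclideanSpace ℝ (Fin (2 * n))) 1) = 1)
    (hinv : ∀ O : EuclideanSpace ℝ (Fin (2 * n)) ≃ₗᵢ[ℝ] EuclideanSpace ℝ (Fin (2 * n)),
      Measure.map (fun x => O x) μ = μ) :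
    ∫ x, (2 * ((x ⟨0, by omega⟩) ^ 2 + (x ⟨1, by omega⟩) ^ 2)) ^ p ∂μ
      = 2 ^ p * eulerBeta p n / eulerBeta p 1 := by
  have hn' : 0 < n := hn
  set E := EuclideanSpace ℝ (Fin (2 * n)) with hE
  set i0 : Fin (2 * n) := ⟨0, by omega⟩ with hi0
  set i1 : Fin (2 * n) := ⟨1, by omega⟩ with hi1
  set e₀ : E := (ephi n).symm (EuclideanSpace.single ⟨0, hn'⟩ 1) with he₀def
  have he₀ : ‖e₀‖ = 1 := by
    rw [he₀def, LinearIsometryEquiv.norm_map, EuclideanSpace.norm_single]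
    norm_num
  have key1 : ∀ x : E, eq2 n x e₀ = (x i0) ^ 2 + (x i1) ^ 2 := by
    intro x
    show ‖(inner ℂ (ephi n x) (ephi n e₀) : ℂ)‖ ^ 2 = _
    rw [he₀def, (ephi n).apply_symm_apply, EuclideanSpace.inner_single_right, one_mul,
      RCLike.norm_conj]
    have h00 : eidx n ⟨0, hn'⟩ 0 = i0 := by ext; simp [eidx, hi0]
    have h01 : eidx n ⟨0, hn'⟩ 1 = i1 := by ext; simp [eidx, hi1]
    rw [ephi_apply, h00, h01, Complex.sq_norm, Complex.normSq_mk]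
    ring
  -- the moment M
  set M : ℝ := ∫ x, eq2 n x e₀ ^ p ∂μ with hM
  -- a.e. facts
  have hae : ∀ᵐ x ∂μ, ‖x‖ = 1 := by
    have hc : μ (Metric.sphere (0 : E) 1)ᶜ = 0 := by
      rw [measure_compl (Metric.isClosed_sphere.measurableSet) (measure_ne_top μ _), measure_univ, hsphere,
        tsub_self]
    rw [MeasureTheory.ae_iff]
    refine measure_mono_null (fun x hx => ?_) hc
    simpa [mem_sphere_zero_iff_norm] using hx
  -- invariance of integrals
  have hins : ∀ (O : E ≃ₗᵢ[ℝ] E) (f : E → ℝ), ∫ x, f (O x) ∂μ = ∫ x, f x ∂μ := by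
    intro O f
    have h1 : ∫ y, f y ∂(Measure.map (⇑(O.toHomeomorph.toMeasurableEquiv)) μ)
        = ∫ x, f (O.toHomeomorph.toMeasurableEquiv x) ∂μ :=
      MeasureTheory.integral_map_equiv _ f
    have h2 : Measure.map (⇑(O.toHomeomorph.toMeasurableEquiv)) μ = μ := hinv O
    rw [h2] at h1
    exact h1.symm
  -- step A
  have stepA : ∀ y : E, ‖y‖ = 1 → ∫ x, eq2 n x y ^ p ∂μ = M := by
    intro y hy
    obtain ⟨O, hOe, hOq⟩ := exists_O n hn' hy
    have h1 : ∫ x, eq2 n x y ^ p ∂μ = ∫ x, eq2 n (O x) y ^ p ∂μ :=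
      (hins O fun x => eq2 n x y ^ p).symm
    rw [h1, ← hOe]
    simp_rw [hOq]
    rfl
  -- the Gaussian-weighted quantity
  set C₀ : ℝ := ∫ y : E, eq2 n e₀ y ^ p * rexp (-π * ‖y‖ ^ 2) with hC₀def
  have hC₀ : C₀ = Real.Gamma (1 + p) / π ^ p := by
    rw [hC₀def]
    simp_rw [eq2_symm n e₀, key1]
    exact eC n p hn'
  -- step B
  have stepB : ∀ x : E, ‖x‖ = 1 →
      ∫ y : E, eq2 n x y ^ p * rexp (-π * ‖y‖ ^ 2) = C₀ := by
    intro x hx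
    obtain ⟨O, hOe, hOq⟩ := exists_O n hn' hx
    have h1 := MeasureTheory.integral_comp O (fun y => eq2 n x y ^ p * rexp (-π * ‖y‖ ^ 2))
    rw [← h1]
    have h2 : ∀ y, eq2 n x (O y) = eq2 n e₀ y := by
      intro y; rw [← hOe, hOq]
    rw [hC₀def]
    congr 1
    funext y
    rw [h2 y, O.norm_map]
  -- nonnegativity of eq2
  have heq2nn : ∀ x y : E, 0 ≤ eq2 n x y := by
    intro x y
    show (0:ℝ) ≤ ‖(inner ℂ (ephi n x) (ephi n y) : ℂ)‖ ^ 2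
    positivity
  -- integrability for Fubini
  have hexp : Integrable (fun v : E => rexp (-‖v‖ ^ 2)) := by
    have h := (GaussianFourier.integrable_cexp_neg_mul_sq_norm_add (V := E)
      (b := (1 : ℂ)) (by norm_num) 0 0).norm
    refine h.congr (Filter.Eventually.of_forall fun v => ?_)
    simp [Complex.norm_exp, ← Complex.ofReal_pow]
  have hgrow : ∀ t : ℝ, 0 ≤ t → t ^ p * rexp (-π * t) ≤ (p.factorial : ℝ) * rexp (-t) := by
    intro t ht
    have h1 : t ^ p / (p.factorial : ℝ) ≤ rexp t := by
      refine le_trans ?_ (Real.sum_le_exp_of_nonneg ht (p + 1))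
      refine Finset.single_le_sum (f := fun i => t ^ i / (i.factorial : ℝ))
        (fun i _ => by positivity) (Finset.self_mem_range_succ p)
    have h2 : rexp t ≤ rexp ((π - 1) * t) := by
      rw [Real.exp_le_exp]
      nlinarith [Real.pi_gt_three]
    have h3 : t ^ p ≤ (p.factorial : ℝ) * rexp ((π - 1) * t) := by
      have hpf : (0:ℝ) < (p.factorial : ℝ) := by positivity
      calc t ^ p = (p.factorial : ℝ) * (t ^ p / (p.factorial : ℝ)) := by field_simp
        _ ≤ (p.factorial : ℝ) * rexp ((π - 1) * t) := by
            exact mul_le_mul_of_nonneg_left (le_trans h1 h2) hpf.le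
    calc t ^ p * rexp (-π * t) ≤ ((p.factorial : ℝ) * rexp ((π - 1) * t)) * rexp (-π * t) :=
          mul_le_mul_of_nonneg_right h3 (Real.exp_pos _).le
      _ = (p.factorial : ℝ) * rexp (-t) := by
          rw [mul_assoc, ← Real.exp_add]
          ring_nf
  have hg2 : Integrable (fun y : E => ‖y‖ ^ (2 * p) * rexp (-π * ‖y‖ ^ 2)) := by
    refine (hexp.const_mul (p.factorial : ℝ)).mono' ?_ (Filter.Eventually.of_forall fun y => ?_)
    · refine Continuous.aestronglyMeasurable ?_
      fun_prop
    · rw [Real.norm_eq_abs, abs_of_nonneg (by positivity)]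
      have := hgrow (‖y‖ ^ 2) (by positivity)
      rw [pow_mul]
      calc (‖y‖ ^ 2) ^ p * rexp (-π * ‖y‖ ^ 2) ≤ (p.factorial : ℝ) * rexp (-‖y‖ ^ 2) := this
        _ = (p.factorial : ℝ) * rexp (-‖y‖ ^ 2) := rfl
  have hf1 : Integrable (fun x : E => ‖x‖ ^ (2 * p)) μ := by
    refine (integrable_const (1 : ℝ)).congr ?_
    filter_upwards [hae] with x hx
    rw [hx, one_pow]
  have hbint : Integrable (fun z : E × E =>
      ‖z.1‖ ^ (2 * p) * (‖z.2‖ ^ (2 * p) * rexp (-π * ‖z.2‖ ^ 2))) (μ.prod volume) :=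
    hf1.mul_prod hg2
  have hHc : Continuous (Function.uncurry fun (x y : E) =>
      eq2 n x y ^ p * rexp (-π * ‖y‖ ^ 2)) := by
    refine Continuous.mul ((eq2_cont n).pow p) ?_
    fun_prop
  have hint : Integrable (Function.uncurry fun (x y : E) =>
      eq2 n x y ^ p * rexp (-π * ‖y‖ ^ 2)) (μ.prod volume) := by
    refine hbint.mono' hHc.aestronglyMeasurable (Filter.Eventually.of_forall fun z => ?_)
    simp only [Function.uncurry]
    rw [Real.norm_eq_abs, abs_of_nonneg
      (mul_nonneg (pow_nonneg (heq2nn _ _) p) (Real.exp_pos _).le)]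
    have h1 : eq2 n z.1 z.2 ^ p ≤ (‖z.1‖ ^ 2 * ‖z.2‖ ^ 2) ^ p :=
      pow_le_pow_left₀ (heq2nn _ _) (eq2_le n z.1 z.2) p
    have h2 : (‖z.1‖ ^ 2 * ‖z.2‖ ^ 2) ^ p = ‖z.1‖ ^ (2 * p) * ‖z.2‖ ^ (2 * p) := by
      rw [mul_pow, pow_mul, pow_mul]
    calc eq2 n z.1 z.2 ^ p * rexp (-π * ‖z.2‖ ^ 2)
        ≤ (‖z.1‖ ^ 2 * ‖z.2‖ ^ 2) ^ p * rexp (-π * ‖z.2‖ ^ 2) :=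
          mul_le_mul_of_nonneg_right h1 (Real.exp_pos _).le
      _ = ‖z.1‖ ^ (2 * p) * (‖z.2‖ ^ (2 * p) * rexp (-π * ‖z.2‖ ^ 2)) := by
          rw [h2]; ring
  have hswap := MeasureTheory.integral_integral_swap hint
  -- left side
  have hL : ∫ x, (∫ y : E, eq2 n x y ^ p * rexp (-π * ‖y‖ ^ 2)) ∂μ = C₀ := by
    have h1 : (fun x => ∫ y : E, eq2 n x y ^ p * rexp (-π * ‖y‖ ^ 2)) =ᵐ[μ] fun _ => C₀ := by
      filter_upwards [hae] with x hx
      exact stepB x hx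
    rw [integral_congr_ae h1, integral_const]
    simp
  -- right side
  haveI : Nonempty (Fin (2 * n)) := ⟨i0⟩
  haveI : Nontrivial E := by
    refine nontrivial_of_ne e₀ 0 fun h => ?_
    rw [h] at he₀; simp at he₀
  set Gm : ℝ := Real.Gamma ((Fintype.card (Fin (2 * n)) : ℝ) / 2 + p)
      / (π ^ p * Real.Gamma ((Fintype.card (Fin (2 * n)) : ℝ) / 2)) with hGmdef
  have hR : ∫ y : E, (∫ x, eq2 n x y ^ p * rexp (-π * ‖y‖ ^ 2) ∂μ) = Gm * M := by
    have hae0 : ∀ᵐ y : E ∂volume, y ≠ 0 := by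
      rw [MeasureTheory.ae_iff]
      simp only [ne_eq, not_not, Set.setOf_eq_eq_singleton]
      exact measure_singleton 0
    have hinner : (fun y : E => ∫ x, eq2 n x y ^ p * rexp (-π * ‖y‖ ^ 2) ∂μ)
        =ᵐ[volume] fun y => (‖y‖ ^ (2 * p) * rexp (-π * ‖y‖ ^ 2)) * M := by
      filter_upwards [hae0] with y hy
      have hy' : ‖y‖ ≠ 0 := norm_ne_zero_iff.mpr hy
      set y' : E := ‖y‖⁻¹ • y with hy'def
      have hy'n : ‖y'‖ = 1 := norm_smul_inv_norm hy
      have hyy : y = ‖y‖ • y' := by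
        rw [hy'def, smul_smul, mul_inv_cancel₀ hy', one_smul]
      have h4 : ∀ x, eq2 n x y = ‖y‖ ^ 2 * eq2 n x y' := by
        intro x
        conv_lhs => rw [hyy]
        exact eq2_smul_right n ‖y‖ x y'
      calc ∫ x, eq2 n x y ^ p * rexp (-π * ‖y‖ ^ 2) ∂μ
          = ∫ x, ((‖y‖ ^ 2) ^ p * rexp (-π * ‖y‖ ^ 2)) * eq2 n x y' ^ p ∂μ := by
            apply integral_congr_ae
            filter_upwards with x
            rw [h4 x, mul_pow]
            ring
        _ = ((‖y‖ ^ 2) ^ p * rexp (-π * ‖y‖ ^ 2)) * ∫ x, eq2 n x y' ^ p ∂μ :=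
            MeasureTheory.integral_const_mul _ _
        _ = (‖y‖ ^ (2 * p) * rexp (-π * ‖y‖ ^ 2)) * M := by
            rw [stepA y' hy'n, pow_mul]
    rw [integral_congr_ae hinner]
    rw [MeasureTheory.integral_mul_const]
    congr 1
    rw [hGmdef, ← egauss_moment (Fin (2 * n)) inferInstance p]
  have hCM : C₀ = Gm * M := by
    rw [← hL, hswap, hR]
  -- evaluate Gm
  have h2n : ((Fintype.card (Fin (2 * n)) : ℕ) : ℝ) / 2 = (n : ℝ) := by
    rw [Fintype.card_fin]; push_cast; ring
  have hGm : Gm = Real.Gamma ((n : ℝ) + p) / (π ^ p * Real.Gamma (n : ℝ)) := by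
    rw [hGmdef, h2n]
  have hGn : 0 < Real.Gamma (n : ℝ) := Real.Gamma_pos_of_pos (by positivity)
  have hGnp : 0 < Real.Gamma ((n : ℝ) + p) := Real.Gamma_pos_of_pos (by positivity)
  have hG1p : 0 < Real.Gamma (1 + (p : ℝ)) := Real.Gamma_pos_of_pos (by positivity)
  have hGmpos : 0 < Gm := by
    rw [hGm]
    positivity
  have hpip : (0:ℝ) < π ^ p := by positivity
  have hMval : M = Real.Gamma (1 + (p : ℝ)) * Real.Gamma (n : ℝ) / Real.Gamma ((n : ℝ) + p) := by
    have hMC : M = C₀ / Gm := by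
      rw [hCM]
      field_simp
    rw [hMC, hC₀, hGm]
    field_simp
  -- final algebra
  have hgoal : ∫ x, (2 * ((x i0) ^ 2 + (x i1) ^ 2)) ^ p ∂μ = 2 ^ p * M := by
    have h1 : ∀ x : E, (2 * ((x i0) ^ 2 + (x i1) ^ 2)) ^ p = 2 ^ p * eq2 n x e₀ ^ p := by
      intro x
      rw [key1, mul_pow]
    simp_rw [h1]
    exact MeasureTheory.integral_const_mul _ _
  rw [hgoal, hMval]
  have hGp : Real.Gamma (p : ℝ) ≠ 0 := (Real.Gamma_pos_of_pos (by positivity)).ne'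
  have hGp1 : Real.Gamma ((p : ℝ) + 1) = Real.Gamma (1 + (p : ℝ)) := by rw [add_comm]
  have hGpn : Real.Gamma ((p : ℝ) + n) = Real.Gamma ((n : ℝ) + p) := by rw [add_comm]
  rw [eulerBeta, eulerBeta, hGpn, hGp1, Real.Gamma_one]
  field_simp
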